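/- In the linear case F̃(τ, η) = τ, if the limiting system admits a solution (μ̃^o, μ̃^i, ξ̃) with ∫_{∂ω^i} μ̃^i dσ = ∫_{∂Ω^o} g^o dσ, then integrating the second equation yields the closed formula ξ̃ = (1/|∂ω^i|₁) [ (1 − |∂ω^i|₁ l₀/(2π)) ∫_{∂Ω^o} g^o dσ − r₀ ∫_{∂ω^i} g^i dσ ], where |∂ω^i|₁ is the arclength of ∂ω^i. -/

import Mathlib

open Real MeasureTheory
open scoped MeasureTheory

noncomputable def S₂ (x : EuclideanSpace ℝ (Fin 2)) : ℝ := (1 / (2 * Real.pi)) * Real.log ‖x‖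

/-- in the linear case F̃(τ,η) = τ, integrating the second limiting equation
gives the closed formula for ξ̃ in terms of l₀, r₀ and the data. The classical double-layer
identity on ∂ω^i and the needed integrabilities are recorded as hypotheses. -/
theorem stmt_13 (Ωo ωi : Set (EuclideanSpace ℝ (Fin 2)))
    (hΩo : IsOpen Ωo) (hΩc : IsConnected Ωo) (hΩb : Bornology.IsBounded Ωo)
    (hωo : IsOpen ωi) (hωc : IsConnected ωi) (hωb : Bornology.IsBounded ωi)
    (h0Ω : (0 : EuclideanSpace ℝ (Fin 2)) ∈ Ωo) (h0ω : (0 : EuclideanSpace ℝ (Fin 2)) ∈ ωi)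
    (νi : EuclideanSpace ℝ (Fin 2) → EuclideanSpace ℝ (Fin 2))
    (go gi μi : EuclideanSpace ℝ (Fin 2) → ℝ) (ξ l₀ r₀ : ℝ)
    -- the arclength |∂ω^i|₁ is finite and nonzero :
    (hfin : μH[1] (frontier ωi) ≠ ⊤) (hpos : (μH[1] (frontier ωi)).toReal ≠ 0)
    -- ∫_{∂ω^i} μ̃^i dσ = ∫_{∂Ω^o} g^o dσ :
    (hmean : ∫ s in frontier ωi, μi s ∂μH[1] = ∫ x in frontier Ωo, go x ∂μH[1])
    -- the linear limiting equation on ∂ω^i :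
    (heq2 : ∀ t ∈ frontier ωi,
      (1/2) * μi t
        + (∫ s in frontier ωi, (inner ℝ (νi t) (gradient S₂ (t - s)) : ℝ) * μi s ∂μH[1])
        = (l₀ / (2 * Real.pi)) * (∫ s in frontier ωi, μi s ∂μH[1]) + ξ + gi t * r₀)
    -- classical identity on ∂ω^i :
    (hid : ∫ t in frontier ωi,
        (∫ s in frontier ωi, (inner ℝ (νi t) (gradient S₂ (t - s)) : ℝ) * μi s ∂μH[1]) ∂μH[1]
        = (1/2) * ∫ s in frontier ωi, μi s ∂μH[1])
    -- integrability of the terms :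
    (hint1 : IntegrableOn μi (frontier ωi) μH[1])
    (hint2 : IntegrableOn
      (fun t => ∫ s in frontier ωi, (inner ℝ (νi t) (gradient S₂ (t - s)) : ℝ) * μi s ∂μH[1])
      (frontier ωi) μH[1])
    (hint3 : IntegrableOn gi (frontier ωi) μH[1]) :
    ξ = (1 / (μH[1] (frontier ωi)).toReal) *
      ((1 - (μH[1] (frontier ωi)).toReal * l₀ / (2 * Real.pi)) *
          (∫ x in frontier Ωo, go x ∂μH[1])
        - r₀ * ∫ t in frontier ωi, gi t ∂μH[1]) := by
  set L := (μH[1] (frontier ωi)).toReal with hL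
  set I := ∫ s in frontier ωi, μi s ∂μH[1] with hI
  set G := ∫ t in frontier ωi, gi t ∂μH[1] with hG
  have hmeas : MeasurableSet (frontier ωi) := isClosed_frontier.measurableSet
  have key : ∫ t in frontier ωi,
      ((1/2) * μi t
        + (∫ s in frontier ωi, (inner ℝ (νi t) (gradient S₂ (t - s)) : ℝ) * μi s ∂μH[1])) ∂μH[1]
      = ∫ t in frontier ωi,
        ((l₀ / (2 * Real.pi)) * I + ξ + gi t * r₀) ∂μH[1] :=
    setIntegral_congr_fun hmeas fun t ht => heq2 t ht
  have hconst : ∀ c : ℝ, ∫ _ in frontier ωi, c ∂μH[1] = L * c := by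
    intro c
    rw [setIntegral_const, smul_eq_mul]
    rfl
  have hL1 : ∫ t in frontier ωi,
      ((1/2) * μi t
        + (∫ s in frontier ωi, (inner ℝ (νi t) (gradient S₂ (t - s)) : ℝ) * μi s ∂μH[1])) ∂μH[1]
      = I := by
    rw [integral_add (hint1.const_mul _) hint2, integral_const_mul, hid, ← hI]
    ring
  have hR1 : ∫ t in frontier ωi,
      ((l₀ / (2 * Real.pi)) * I + ξ + gi t * r₀) ∂μH[1]
      = L * ((l₀ / (2 * Real.pi)) * I + ξ) + G * r₀ := by
    rw [integral_add ((integrableOn_const hfin (C := (l₀ / (2 * Real.pi)) * I + ξ))) (hint3.mul_const _),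
      integral_mul_const, hconst, ← hG]
  rw [hL1, hR1] at key
  rw [← hmean]
  have hπ : (2 * Real.pi) ≠ 0 := by positivity
  field_simp at key ⊢
  linarith [key]
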